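/- (Transformer controller approximates LQG) Consider the system x_{t+1} = Ax_t + Bu_t + w_t, y_t = Cx_t + v_t, controlled by u_t = Kx̂_t, where x̂_t = Σ_{i=t−H+1}^t α_{i,t} x̃_i with x̃_i = (A+BK−LC) x̂_{i−1} + L y_{i−1} and Gaussian softmax weights α_{i,t} with temperature β, versus the same system driven by the LQG controller x̂*_t = (A+BK−LC)x̂*_{t−1} + Ly_{t−1}, u*_t = Kx̂*_t, with matching initializations x_0 = x*_0 and x̂_0 = x̃_0 = x̂*_0 and the same disturbance sequences. Suppose A−LC and A+BK are stable, so 𝔸 (the 4n×4n closed-loop matrix) satisfies 𝔸 = 𝕄Θ𝕄^{−1} with ‖Θ‖ < 1, κ = ‖𝕄‖‖𝕄^{−1}‖. Then for every ε > 0, choosing β ≥ C H² κ² / (2e(1−‖Θ‖)² ε²) with C = 2‖BK‖² + 2‖A+BK−LC‖² guarantees ‖x_t − x*_t‖ ≤ ε for all t ≥ 0. -/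

import Mathlib

noncomputable section

lemma le_of_sq_le_sq' (a b : ℝ) (hb : 0 ≤ b) (h : a^2 ≤ b^2) (ha : 0 ≤ a) : a ≤ b := by
  nlinarith

lemma exp_decay_bound (β r : ℝ) (hβ : 0 < β) (hr : 0 ≤ r) :
    Real.exp (-β * r ^ 2) * r ≤ 1 / Real.sqrt (2 * Real.exp 1 * β) := by
  have hs : 0 < Real.sqrt (2 * Real.exp 1 * β) := Real.sqrt_pos.mpr (by positivity)
  have key : Real.sqrt (2 * Real.exp 1 * β) * r ≤ Real.exp (β * r ^ 2) := by
    have h1 : 2 * (β * r ^ 2) ≤ Real.exp (2 * (β * r ^ 2) - 1) := by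
      have := Real.add_one_le_exp (2 * (β * r ^ 2) - 1)
      linarith
    have h2 : 2 * Real.exp 1 * (β * r ^ 2) ≤ Real.exp (β * r ^ 2) ^ 2 := by
      have he : Real.exp (2 * (β * r ^ 2) - 1) * Real.exp 1 = Real.exp (β * r ^ 2) ^ 2 := by
        rw [← Real.exp_add]
        rw [show 2 * (β * r ^ 2) - 1 + 1 = β * r ^ 2 + β * r ^ 2 by ring, Real.exp_add]
        ring
      nlinarith [Real.exp_pos (1 : ℝ), h1]
    have h3 : (Real.sqrt (2 * Real.exp 1 * β) * r) ^ 2 ≤ Real.exp (β * r ^ 2) ^ 2 := by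
      rw [mul_pow, Real.sq_sqrt (by positivity)]
      nlinarith
    exact le_of_sq_le_sq' _ _ (Real.exp_pos _).le h3 (by positivity)
  rw [neg_mul, Real.exp_neg, inv_mul_eq_div, div_le_div_iff₀ (Real.exp_pos _) hs]
  nlinarith

lemma geo_bound {E : Type*} [NormedAddCommGroup E] (θ c : ℝ) (hθ0 : 0 ≤ θ) (hθ : θ < 1)
    (hc : 0 ≤ c) (ζ : ℤ → E) (h0 : ζ 0 = 0)
    (hrec : ∀ t : ℤ, 0 ≤ t → ‖ζ (t + 1)‖ ≤ θ * ‖ζ t‖ + c) :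
    ∀ t : ℤ, 0 ≤ t → ‖ζ t‖ ≤ c / (1 - θ) := by
  have h1mθ : 0 < 1 - θ := by linarith
  refine fun t ht => Int.le_induction (motive := fun n _ => ‖ζ n‖ ≤ c / (1 - θ)) ?_ ?_ t ht
  · show ‖ζ 0‖ ≤ c / (1 - θ); rw [h0, norm_zero]; exact div_nonneg hc h1mθ.le
  · intro n hn ih
    show ‖ζ (n + 1)‖ ≤ c / (1 - θ)
    have h2 : θ * (c / (1 - θ)) + c = c / (1 - θ) := by field_simp; ring
    have h3 := hrec n hn
    have h4 := mul_le_mul_of_nonneg_left ih hθ0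
    linarith

open Finset in
lemma softmax_close {ι : Type*} {E : Type*} [NormedAddCommGroup E] [NormedSpace ℝ E]
    (β : ℝ) (hβ : 0 < β) (s : Finset ι) (z : ι → E) (t : ι) (hts : t ∈ s) :
    ‖(∑ i ∈ s, (Real.exp (-β * ‖z i - z t‖ ^ 2) /
        ∑ j ∈ s, Real.exp (-β * ‖z j - z t‖ ^ 2)) • z i) - z t‖ ≤
      (s.card : ℝ) * (1 / Real.sqrt (2 * Real.exp 1 * β)) := by
  set e : ι → ℝ := fun i => Real.exp (-β * ‖z i - z t‖ ^ 2) with he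
  set D : ℝ := ∑ j ∈ s, e j with hD
  have hepos : ∀ i, 0 < e i := fun i => Real.exp_pos _
  have hD1 : (1:ℝ) ≤ D := by
    have h1 : e t = 1 := by simp [he]
    calc (1:ℝ) = e t := h1.symm
    _ ≤ D := Finset.single_le_sum (fun i _ => (hepos i).le) hts
  have hDpos : 0 < D := zero_lt_one.trans_le hD1
  have hsum : ∑ i ∈ s, e i / D = 1 := by rw [← Finset.sum_div]; field_simp; exact hD.symm
  have hkey : ∑ i ∈ s, (e i / D) • (z i - z t) = (∑ i ∈ s, (e i / D) • z i) - z t := by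
    simp_rw [smul_sub]
    rw [Finset.sum_sub_distrib, ← Finset.sum_smul, hsum, one_smul]
  rw [← hkey]
  calc ‖∑ i ∈ s, (e i / D) • (z i - z t)‖ ≤ ∑ i ∈ s, ‖(e i / D) • (z i - z t)‖ :=
        norm_sum_le _ _
    _ ≤ ∑ i ∈ s, (1 / Real.sqrt (2 * Real.exp 1 * β)) := by
        apply Finset.sum_le_sum
        intro i _
        rw [norm_smul, Real.norm_eq_abs, abs_of_nonneg (by positivity)]
        calc e i / D * ‖z i - z t‖ ≤ e i * ‖z i - z t‖ := by
              apply mul_le_mul_of_nonneg_right _ (norm_nonneg _)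
              exact div_le_self (hepos i).le hD1
          _ ≤ 1 / Real.sqrt (2 * Real.exp 1 * β) :=
              exp_decay_bound β _ hβ (norm_nonneg _)
    _ = (s.card : ℝ) * (1 / Real.sqrt (2 * Real.exp 1 * β)) := by
        rw [Finset.sum_const, nsmul_eq_mul]

/-- The `ℓ²` product of two Euclidean spaces. -/
abbrev EucPair (n : ℕ) :=
  WithLp 2 (EuclideanSpace ℝ (Fin n) × EuclideanSpace ℝ (Fin n))

/-- The `ℓ²` product of four Euclidean spaces (a `4n`-dimensional Euclidean space). -/
abbrev EucQuad (n : ℕ) := WithLp 2 (EucPair n × EucPair n)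

/-- Stack four vectors of `ℝⁿ` into `ℝ^{4n}` (with the Euclidean norm). -/
def stack4 {n : ℕ} (a b c d : EuclideanSpace ℝ (Fin n)) : EucQuad n :=
  (WithLp.equiv 2 _).symm ((WithLp.equiv 2 _).symm (a, b), (WithLp.equiv 2 _).symm (c, d))

lemma stack4_add {n : ℕ} (a b c d a' b' c' d' : EuclideanSpace ℝ (Fin n)) :
    stack4 a b c d + stack4 a' b' c' d' = stack4 (a+a') (b+b') (c+c') (d+d') := rfl

lemma stack4_norm_sq {n : ℕ} (a b c d : EuclideanSpace ℝ (Fin n)) :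
    ‖stack4 a b c d‖ ^ 2 = ‖a‖^2 + ‖b‖^2 + ‖c‖^2 + ‖d‖^2 := by
  simp [stack4, WithLp.prod_norm_sq_eq_of_L2]
  ring

set_option maxHeartbeats 2000000 in
open Finset in
/-- The Transformer-Filter-based controller approximates the LQG controller: with
temperature `β ≥ C H² κ²/(2e(1−‖Θ‖)² ε²)`, `C = 2‖BK‖² + 2‖A+BK−LC‖²`, the closed-loop
state trajectory stays `ε`-close to the LQG state trajectory, uniformly in time. -/
theorem stmt14 {n m p : ℕ}
    (A : EuclideanSpace ℝ (Fin n) →L[ℝ] EuclideanSpace ℝ (Fin n))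
    (B : EuclideanSpace ℝ (Fin m) →L[ℝ] EuclideanSpace ℝ (Fin n))
    (C : EuclideanSpace ℝ (Fin n) →L[ℝ] EuclideanSpace ℝ (Fin p))
    (K : EuclideanSpace ℝ (Fin n) →L[ℝ] EuclideanSpace ℝ (Fin m))
    (L : EuclideanSpace ℝ (Fin p) →L[ℝ] EuclideanSpace ℝ (Fin n))
    -- the 4n×4n closed-loop matrix 𝔸, acting blockwise
    (𝔸 : EucQuad n →L[ℝ] EucQuad n)
    (h𝔸 : ∀ a b c d : EuclideanSpace ℝ (Fin n),
      𝔸 (stack4 a b c d) =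
        stack4 (A a + B (K b)) (L (C a) + (A + B.comp K - L.comp C) b)
               (A c + B (K d)) (L (C c) + (A + B.comp K - L.comp C) d))
    -- 𝔸 = 𝕄 Θ 𝕄⁻¹ with ‖Θ‖ < 1 (stability of the closed loop)
    (𝕄 : EucQuad n ≃L[ℝ] EucQuad n) (Θ : EucQuad n →L[ℝ] EucQuad n)
    (hsim : 𝔸 = (𝕄 : EucQuad n →L[ℝ] EucQuad n).comp
        (Θ.comp (𝕄.symm : EucQuad n →L[ℝ] EucQuad n)))
    (hΘ : ‖Θ‖ < 1)
    (κ : ℝ)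
    (hκ : κ = ‖(𝕄 : EucQuad n →L[ℝ] EucQuad n)‖ * ‖(𝕄.symm : EucQuad n →L[ℝ] EucQuad n)‖)
    (H : ℕ) (hH : 1 ≤ H) (β : ℝ)
    -- disturbances, shared by both closed loops
    (w : ℤ → EuclideanSpace ℝ (Fin n)) (v : ℤ → EuclideanSpace ℝ (Fin p))
    -- Transformer-controlled system
    (x xhat xtilde : ℤ → EuclideanSpace ℝ (Fin n)) (y : ℤ → EuclideanSpace ℝ (Fin p))
    -- LQG-controlled system
    (xstar xhatstar : ℤ → EuclideanSpace ℝ (Fin n)) (ystar : ℤ → EuclideanSpace ℝ (Fin p))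
    -- convention: quantities vanish for negative times
    (hyneg : ∀ i : ℤ, i < 0 → y i = 0)
    (hhatneg : ∀ i : ℤ, i < 0 → xhat i = 0)
    (htildeneg : ∀ i : ℤ, i < 0 → xtilde i = 0)
    -- matching initializations
    (hx0 : x 0 = xstar 0) (hhat0 : xhat 0 = xhatstar 0) (htilde0 : xtilde 0 = xhatstar 0)
    -- dynamics of the Transformer-controlled system, with control u_t = K x̂_t
    (hx : ∀ t : ℤ, 0 ≤ t → x (t + 1) = A (x t) + B (K (xhat t)) + w t)
    (hy : ∀ t : ℤ, 0 ≤ t → y t = C (x t) + v t)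
    (htilde : ∀ i : ℤ, 1 ≤ i →
      xtilde i = (A + B.comp K - L.comp C) (xhat (i - 1)) + L (y (i - 1)))
    (hhat : ∀ t : ℤ, 1 ≤ t →
      xhat t = ∑ i ∈ Icc (t - (H : ℤ) + 1) t,
        (Real.exp (-β * ‖xtilde i - xtilde t‖ ^ 2) /
          ∑ j ∈ Icc (t - (H : ℤ) + 1) t, Real.exp (-β * ‖xtilde j - xtilde t‖ ^ 2)) •
          xtilde i)
    -- dynamics of the LQG-controlled system, with control u*_t = K x̂*_t
    (hxstar : ∀ t : ℤ, 0 ≤ t → xstar (t + 1) = A (xstar t) + B (K (xhatstar t)) + w t)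
    (hystar : ∀ t : ℤ, 0 ≤ t → ystar t = C (xstar t) + v t)
    (hhatstar : ∀ t : ℤ, 1 ≤ t →
      xhatstar t = (A + B.comp K - L.comp C) (xhatstar (t - 1)) + L (ystar (t - 1)))
    (ε : ℝ) (hε : 0 < ε)
    (hβ : β ≥ (2 * ‖B.comp K‖ ^ 2 + 2 * ‖A + B.comp K - L.comp C‖ ^ 2) *
        (H : ℝ) ^ 2 * κ ^ 2 / (2 * Real.exp 1 * (1 - ‖Θ‖) ^ 2 * ε ^ 2)) :
    ∀ t : ℤ, 0 ≤ t → ‖x t - xstar t‖ ≤ ε := by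
  intro t ht
  set G := B.comp K with hGdef
  set F := A + G - L.comp C with hFdef
  have hθ0 : (0:ℝ) ≤ ‖Θ‖ := norm_nonneg _
  have h1mθ : 0 < 1 - ‖Θ‖ := by linarith
  set η : ℤ → EuclideanSpace ℝ (Fin n) := fun i => xhat i - xtilde i with hηdef
  set Δ : ℤ → EucQuad n := fun i => stack4 (x i - xstar i) (xtilde i - xhatstar i) 0 0 with hΔdef
  set d : ℤ → EucQuad n := fun i => stack4 (G (η i)) (F (η i)) 0 0 with hddef
  -- initial condition
  have hΔ0 : Δ 0 = 0 := by
    simp only [hΔdef, hx0, htilde0, sub_self]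
    rfl
  -- error recursion
  have hΔrec : ∀ s : ℤ, 0 ≤ s → Δ (s + 1) = 𝔸 (Δ s) + d s := by
    intro s hs
    have hs1 : (1:ℤ) ≤ s + 1 := by omega
    have e1 : x (s+1) - xstar (s+1)
        = (A (x s - xstar s) + G (xtilde s - xhatstar s)) + G (η s) := by
      rw [hx s hs, hxstar s hs]
      simp only [hηdef, hGdef, map_sub, ContinuousLinearMap.comp_apply]
      abel
    have e2 : xtilde (s+1) - xhatstar (s+1)
        = (L (C (x s - xstar s)) + F (xtilde s - xhatstar s)) + F (η s) := by
      rw [htilde (s+1) hs1, hhatstar (s+1) hs1]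
      simp only [add_sub_cancel_right]
      rw [hy s hs, hystar s hs]
      simp only [hηdef, map_sub, map_add]
      abel
    have h4 := h𝔸 (x s - xstar s) (xtilde s - xhatstar s) 0 0
    simp only [map_zero, add_zero, zero_add] at h4
    have hsum := stack4_add (A (x s - xstar s) + G (xtilde s - xhatstar s))
      (L (C (x s - xstar s)) + F (xtilde s - xhatstar s)) 0 0 (G (η s)) (F (η s)) 0 0
    simp only [add_zero] at hsum
    show stack4 (x (s+1) - xstar (s+1)) (xtilde (s+1) - xhatstar (s+1)) 0 0 = _
    rw [e1, e2, h4]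
    exact hsum.symm
  -- choice of a uniform bound on the perturbation
  obtain ⟨M, hM0, hMd, hMε⟩ :
      ∃ M : ℝ, 0 ≤ M ∧ (∀ s : ℤ, 0 ≤ s → ‖d s‖ ≤ M) ∧ κ * M / (1 - ‖Θ‖) ≤ ε := by
    by_cases hS : ‖G‖ = 0 ∧ ‖F‖ = 0
    · refine ⟨0, le_refl _, ?_, ?_⟩
      · intro s _
        have hG0 : G = 0 := norm_eq_zero.mp hS.1
        have hF0 : F = 0 := norm_eq_zero.mp hS.2
        simp only [hddef, hG0, hF0, ContinuousLinearMap.zero_apply]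
        rw [show stack4 (0 : EuclideanSpace ℝ (Fin n)) 0 0 0 = 0 from rfl, norm_zero]
      · rw [mul_zero, zero_div]; exact hε.le
    · -- some gain is nonzero; then the state space is nontrivial and β > 0
      have hSpos : 0 < ‖G‖^2 + ‖F‖^2 := by
        rcases not_and_or.mp hS with h | h
        · have h' : 0 < ‖G‖ := lt_of_le_of_ne (norm_nonneg _) (Ne.symm h)
          nlinarith [sq_nonneg ‖F‖]
        · have h' : 0 < ‖F‖ := lt_of_le_of_ne (norm_nonneg _) (Ne.symm h)
          nlinarith [sq_nonneg ‖G‖]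
      have hnt : Nontrivial (EuclideanSpace ℝ (Fin n)) := by
        rcases not_and_or.mp hS with h | h
        · have hG0 : G ≠ 0 := fun hh => h (by rw [hh, norm_zero])
          obtain ⟨u, hu⟩ : ∃ u, G u ≠ 0 := by
            by_contra hcon
            push_neg at hcon
            exact hG0 (ContinuousLinearMap.ext fun u => by simpa using hcon u)
          exact nontrivial_of_ne (G u) 0 hu
        · have hF0 : F ≠ 0 := fun hh => h (by rw [hh, norm_zero])
          obtain ⟨u, hu⟩ : ∃ u, F u ≠ 0 := by
            by_contra hcon
            push_neg at hcon
            exact hF0 (ContinuousLinearMap.ext fun u => by simpa using hcon u)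
          exact nontrivial_of_ne (F u) 0 hu
      haveI := hnt
      haveI hntq : Nontrivial (EucQuad n) := by
        obtain ⟨u, hu⟩ := exists_ne (0 : EuclideanSpace ℝ (Fin n))
        refine nontrivial_of_ne (stack4 u 0 0 0) 0 fun hh => hu ?_
        have hn0 : ‖stack4 u (0 : EuclideanSpace ℝ (Fin n)) 0 0‖ = 0 := by rw [hh, norm_zero]
        have h2 := stack4_norm_sq u (0 : EuclideanSpace ℝ (Fin n)) 0 0
        rw [hn0] at h2
        simp only [norm_zero] at h2
        have hu2 : ‖u‖ ^ 2 = 0 := by linarith [h2]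
        exact norm_eq_zero.mp (by nlinarith [norm_nonneg u])
      have hκ1 : (1:ℝ) ≤ κ := by
        have h1 : ‖ContinuousLinearMap.id ℝ (EucQuad n)‖ = 1 := ContinuousLinearMap.norm_id
        have h2 : ((𝕄 : EucQuad n →L[ℝ] EucQuad n).comp
            (𝕄.symm : EucQuad n →L[ℝ] EucQuad n)) = ContinuousLinearMap.id ℝ (EucQuad n) :=
          ContinuousLinearEquiv.coe_comp_coe_symm 𝕄
        have h3 := ContinuousLinearMap.opNorm_comp_le
          (𝕄 : EucQuad n →L[ℝ] EucQuad n) (𝕄.symm : EucQuad n →L[ℝ] EucQuad n)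
        rw [h2, h1] at h3
        rw [hκ]; exact h3
      have hβpos : 0 < β := by
        have hH1 : (1:ℝ) ≤ (H:ℝ) := by exact_mod_cast hH
        have hnum : 0 < (2 * ‖G‖^2 + 2 * ‖F‖^2) * (H:ℝ)^2 * κ^2 := by
          have hh1 : (0:ℝ) < 2 * ‖G‖^2 + 2 * ‖F‖^2 := by linarith
          have hh2 : (0:ℝ) < (H:ℝ)^2 := pow_pos (by linarith) 2
          have hh3 : (0:ℝ) < κ^2 := pow_pos (by linarith) 2
          exact mul_pos (mul_pos hh1 hh2) hh3
        have hden : 0 < 2 * Real.exp 1 * (1 - ‖Θ‖)^2 * ε^2 := by positivity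
        calc (0:ℝ) < (2 * ‖G‖^2 + 2 * ‖F‖^2) * (H:ℝ)^2 * κ^2 /
              (2 * Real.exp 1 * (1 - ‖Θ‖)^2 * ε^2) := div_pos hnum hden
          _ ≤ β := hβ
      have hsqrtpos : 0 < Real.sqrt (2 * Real.exp 1 * β) := Real.sqrt_pos.mpr (by positivity)
      -- softmax closeness bound
      have hη : ∀ s : ℤ, 0 ≤ s → ‖η s‖ ≤ (H:ℝ) * (1 / Real.sqrt (2 * Real.exp 1 * β)) := by
        intro s hs
        rcases eq_or_lt_of_le hs with h0 | h1
        · have hη0 : η 0 = 0 := by simp [hηdef, hhat0, htilde0]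
          rw [← h0, hη0, norm_zero]; positivity
        · have hs1 : (1:ℤ) ≤ s := h1
          have hH1 : (1:ℤ) ≤ (H:ℤ) := by exact_mod_cast hH
          have hts : s ∈ Finset.Icc (s - (H:ℤ) + 1) s := by
            rw [Finset.mem_Icc]; omega
          have hcard : (Finset.Icc (s - (H:ℤ) + 1) s).card = H := by
            rw [Int.card_Icc]; omega
          have hclose := softmax_close β hβpos (Finset.Icc (s - (H:ℤ) + 1) s) xtilde s hts
          rw [hcard] at hclose
          show ‖xhat s - xtilde s‖ ≤ _
          rw [hhat s hs1]
          exact hclose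
      refine ⟨Real.sqrt (‖G‖^2 + ‖F‖^2) * ((H:ℝ) * (1 / Real.sqrt (2 * Real.exp 1 * β))),
        by positivity, ?_, ?_⟩
      · intro s hs
        have hns := stack4_norm_sq (G (η s)) (F (η s)) (0 : EuclideanSpace ℝ (Fin n)) 0
        simp only [norm_zero] at hns
        have hGb := G.le_opNorm (η s)
        have hFb := F.le_opNorm (η s)
        have h1 : ‖d s‖^2 ≤ (‖G‖^2 + ‖F‖^2) * ‖η s‖^2 := by
          rw [show d s = stack4 (G (η s)) (F (η s)) 0 0 from rfl, hns]
          nlinarith [norm_nonneg (G (η s)), norm_nonneg (F (η s)), norm_nonneg (η s),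
            G.opNorm_nonneg, F.opNorm_nonneg]
        have h2 : ‖d s‖ ≤ Real.sqrt (‖G‖^2 + ‖F‖^2) * ‖η s‖ := by
          apply le_of_sq_le_sq' _ _ (by positivity) _ (norm_nonneg _)
          rw [mul_pow, Real.sq_sqrt hSpos.le]
          exact h1
        calc ‖d s‖ ≤ Real.sqrt (‖G‖^2 + ‖F‖^2) * ‖η s‖ := h2
          _ ≤ Real.sqrt (‖G‖^2 + ‖F‖^2) * ((H:ℝ) * (1 / Real.sqrt (2 * Real.exp 1 * β))) :=
            mul_le_mul_of_nonneg_left (hη s hs) (Real.sqrt_nonneg _)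
      · -- the temperature is large enough
        rw [div_le_iff₀ h1mθ]
        have hden : 0 < 2 * Real.exp 1 * (1 - ‖Θ‖)^2 * ε^2 := by positivity
        have hkey : (2 * ‖G‖^2 + 2 * ‖F‖^2) * (H:ℝ)^2 * κ^2 ≤
            β * (2 * Real.exp 1 * (1 - ‖Θ‖)^2 * ε^2) := (div_le_iff₀ hden).mp hβ
        have hstep : κ * Real.sqrt (‖G‖^2 + ‖F‖^2) * (H:ℝ) ≤
            ε * (1 - ‖Θ‖) * Real.sqrt (2 * Real.exp 1 * β) := by
          apply le_of_sq_le_sq' _ _ (by positivity) _ (by positivity)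
          rw [mul_pow, mul_pow, mul_pow, mul_pow, Real.sq_sqrt hSpos.le,
            Real.sq_sqrt (by positivity : (0:ℝ) ≤ 2 * Real.exp 1 * β)]
          nlinarith [hkey, mul_pos (mul_pos (mul_pos (Real.exp_pos 1) hβpos)
            (pow_pos h1mθ 2)) (pow_pos hε 2)]
        rw [show κ * (Real.sqrt (‖G‖^2 + ‖F‖^2) * ((H:ℝ) * (1 / Real.sqrt (2 * Real.exp 1 * β))))
            = (κ * Real.sqrt (‖G‖^2 + ‖F‖^2) * (H:ℝ)) / Real.sqrt (2 * Real.exp 1 * β) by ring,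
          div_le_iff₀ hsqrtpos]
        linarith [hstep]
  -- transformed error sequence
  set ζ : ℤ → EucQuad n := fun i => 𝕄.symm (Δ i) with hζdef
  have hζ0 : ζ 0 = 0 := by simp only [hζdef, hΔ0, map_zero]
  have hζrec : ∀ s : ℤ, 0 ≤ s → ‖ζ (s + 1)‖ ≤
      ‖Θ‖ * ‖ζ s‖ + ‖(𝕄.symm : EucQuad n →L[ℝ] EucQuad n)‖ * M := by
    intro s hs
    have h1 : ζ (s + 1) = Θ (ζ s) + (𝕄.symm : EucQuad n →L[ℝ] EucQuad n) (d s) := by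
      show 𝕄.symm (Δ (s + 1)) = _
      rw [hΔrec s hs, map_add]
      congr 1
      rw [hsim]
      simp [ContinuousLinearMap.comp_apply, ContinuousLinearEquiv.symm_apply_apply]
      rfl
    rw [h1]
    calc ‖Θ (ζ s) + (𝕄.symm : EucQuad n →L[ℝ] EucQuad n) (d s)‖
        ≤ ‖Θ (ζ s)‖ + ‖(𝕄.symm : EucQuad n →L[ℝ] EucQuad n) (d s)‖ := norm_add_le _ _
      _ ≤ ‖Θ‖ * ‖ζ s‖ + ‖(𝕄.symm : EucQuad n →L[ℝ] EucQuad n)‖ * M := by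
          refine add_le_add (Θ.le_opNorm _) ?_
          refine le_trans ((𝕄.symm : EucQuad n →L[ℝ] EucQuad n).le_opNorm _) ?_
          exact mul_le_mul_of_nonneg_left (hMd s hs) (norm_nonneg _)
  have hζ := geo_bound ‖Θ‖ (‖(𝕄.symm : EucQuad n →L[ℝ] EucQuad n)‖ * M) hθ0 hΘ
    (mul_nonneg (norm_nonneg _) hM0) ζ hζ0 hζrec
  have hΔle : ‖Δ t‖ ≤ κ * M / (1 - ‖Θ‖) := by
    have h1 : Δ t = 𝕄 (ζ t) := by
      simp only [hζdef]
      rw [ContinuousLinearEquiv.apply_symm_apply]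
    rw [h1]
    calc ‖𝕄 (ζ t)‖ ≤ ‖(𝕄 : EucQuad n →L[ℝ] EucQuad n)‖ * ‖ζ t‖ :=
          (𝕄 : EucQuad n →L[ℝ] EucQuad n).le_opNorm _
      _ ≤ ‖(𝕄 : EucQuad n →L[ℝ] EucQuad n)‖ *
          (‖(𝕄.symm : EucQuad n →L[ℝ] EucQuad n)‖ * M / (1 - ‖Θ‖)) :=
          mul_le_mul_of_nonneg_left (hζ t ht) (norm_nonneg _)
      _ = κ * M / (1 - ‖Θ‖) := by rw [hκ]; ring
  have hcomp : ‖x t - xstar t‖ ≤ ‖Δ t‖ := by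
    have hns := stack4_norm_sq (x t - xstar t) (xtilde t - xhatstar t)
      (0 : EuclideanSpace ℝ (Fin n)) 0
    simp only [norm_zero] at hns
    apply le_of_sq_le_sq' _ _ (norm_nonneg _) _ (norm_nonneg _)
    rw [show Δ t = stack4 (x t - xstar t) (xtilde t - xhatstar t) 0 0 from rfl, hns]
    nlinarith [sq_nonneg ‖xtilde t - xhatstar t‖]
  exact hcomp.trans (hΔle.trans hMε)

end
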